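/- arXiv:1611.04458 — 9 statements merged into one kernel-verified Lean document; each statement's English description precedes it below -/
import Mathlib

section
/- Let f : G → H be a semi-planar function between finite abelian groups of the same even order k. Then the incidence graph of S(G,H;f) is either connected, or it has exactly two connected components, and each of the two components contains exactly k²/2 points and exactly k²/2 lines. -/
/-- A function `f : G → H` is *semi-planar* if for every nonzero `a : G` and every
`y : H`, the equation `f (x + a) - f x = y` has either 0 or exactly 2 solutions. -/
def IsSemiPlanar {G H : Type*} [AddGroup G] [AddGroup H] (f : G → H) : Prop :=
  ∀ a : G, a ≠ 0 → ∀ y : H,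
    Nat.card {x : G // f (x + a) - f x = y} = 0 ∨
    Nat.card {x : G // f (x + a) - f x = y} = 2

/-- The point `p = (x, y)` is incident with the line `l = L(a, b)` iff `y = f (x - a) + b`. -/
def Incid {G H : Type*} [Sub G] [Add H] (f : G → H) (p l : G × H) : Prop :=
  p.2 = f (p.1 - l.1) + l.2

/-- The adjacency relation of the incidence graph of `S(G,H;f)`: points on the left,
lines on the right, a point adjacent to a line iff incident. -/
def IncAdj {G H : Type*} [Sub G] [Add H] (f : G → H) :
    (G × H) ⊕ (G × H) → (G × H) ⊕ (G × H) → Prop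
  | Sum.inl p, Sum.inr l => Incid f p l
  | Sum.inr l, Sum.inl p => Incid f p l
  | _, _ => False

/-- The incidence graph of `S(G,H;f)`. -/
def incGraph {G H : Type*} [Sub G] [Add H] (f : G → H) :
    SimpleGraph ((G × H) ⊕ (G × H)) where
  Adj := IncAdj f
  symm := by
    constructor
    intro v w h
    cases v <;> cases w <;> exact h
  loopless := by
    constructor
    intro v h
    cases v <;> exact h

/-- The line `L(a,b)` belongs to the substructure `S₁`, i.e. lies in the same
connected component of the incidence graph as the line `L(0,0)`. -/
def InS1 {G H : Type*} [SubtractionMonoid G] [SubNegMonoid H] (f : G → H) (l : G × H) : Prop :=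
  (incGraph f).Reachable (Sum.inr l) (Sum.inr ((0 : G), (0 : H)))

section Aux
variable {G H : Type*} [AddCommGroup G] [AddCommGroup H] (f : G → H)

def tHom (t : G × H) : incGraph f →g incGraph f where
  toFun := Sum.map (· + t) (· + t)
  map_rel' := by
    rintro (p | l) (q | m) h
    · exact h.elim
    · show Incid f (p + t) (m + t)
      have h' : Incid f p m := h
      simp only [Incid, Prod.snd_add, Prod.fst_add] at h' ⊢
      rw [add_sub_add_right_eq_sub, h', add_assoc]
    · show Incid f (q + t) (l + t)
      have h' : Incid f q l := h
      simp only [Incid, Prod.snd_add, Prod.fst_add] at h' ⊢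
      rw [add_sub_add_right_eq_sub, h', add_assoc]
    · exact h.elim

lemma reach_add (t : G × H) {u v : (G × H) ⊕ (G × H)}
    (h : (incGraph f).Reachable u v) :
    (incGraph f).Reachable (Sum.map (· + t) (· + t) u) (Sum.map (· + t) (· + t) v) :=
  h.map (tHom f t)

lemma reach_sub_iff (l l' : G × H) :
    (incGraph f).Reachable (Sum.inr l) (Sum.inr l') ↔
      (incGraph f).Reachable (Sum.inr (l - l')) (Sum.inr (0 : G × H)) := by
  constructor
  · intro h
    have := reach_add f (-l') h
    simpa [sub_eq_add_neg] using this
  · intro h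
    have := reach_add f l' h
    simpa using this

lemma adj_inl_inr {p l : G × H} (h : p.2 = f (p.1 - l.1) + l.2) :
    (incGraph f).Adj (Sum.inl p) (Sum.inr l) := h

lemma diff_reach (a u : G) :
    (incGraph f).Reachable (Sum.inr (a, f (u + a) - f u)) (Sum.inr (0 : G × H)) := by
  have h1 : (incGraph f).Adj (Sum.inl (u + a, f (u + a))) (Sum.inr (a, f (u + a) - f u)) := by
    apply adj_inl_inr
    simp
  have h2 : (incGraph f).Adj (Sum.inl (u + a, f (u + a))) (Sum.inr (0 : G × H)) := by
    apply adj_inl_inr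
    simp [Incid]
  exact (h1.symm.reachable).trans h2.reachable

lemma point_line_reach (p : G × H) :
    (incGraph f).Reachable (Sum.inl p) (Sum.inr (p.1, p.2 - f 0)) := by
  apply SimpleGraph.Adj.reachable
  apply adj_inl_inr
  simp

lemma image_card_eq [Fintype G] [DecidableEq H] (hf : IsSemiPlanar f) (a : G) (ha : a ≠ 0) :
    2 * (Finset.image (fun u => f (u + a) - f u) Finset.univ).card = Fintype.card G := by
  classical
  have h1 : (Finset.univ : Finset G).card =
      ∑ y ∈ Finset.image (fun u => f (u + a) - f u) Finset.univ,
        (Finset.univ.filter (fun u => f (u + a) - f u = y)).card :=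
    Finset.card_eq_sum_card_fiberwise (fun x _ => Finset.mem_image_of_mem _ (Finset.mem_univ x))
  rw [Finset.card_univ] at h1
  have h2 : ∀ y ∈ Finset.image (fun u => f (u + a) - f u) Finset.univ,
      (Finset.univ.filter (fun u => f (u + a) - f u = y)).card = 2 := by
    intro y hy
    have hcard : Nat.card {x : G // f (x + a) - f x = y} =
        (Finset.univ.filter (fun u => f (u + a) - f u = y)).card := by
      rw [Nat.card_eq_fintype_card, Fintype.card_subtype]
    rcases hf a ha y with h0 | h2
    · exfalso
      obtain ⟨u, _, hu⟩ := Finset.mem_image.mp hy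
      rw [Nat.card_eq_zero] at h0
      rcases h0 with h0 | h0
      · exact h0.elim ⟨u, hu⟩
      · exact (not_finite {x : G // f (x + a) - f x = y})
    · rw [← hcard, h2]
  rw [Finset.sum_congr rfl h2, Finset.sum_const, smul_eq_mul] at h1
  omega

end Aux

/-- The incidence graph of `S(G,H;f)` for a semi-planar `f` is either connected, or has
exactly two connected components, each containing exactly `k²/2` points and `k²/2`
lines. -/
theorem connected_or_two_components {G H : Type*} [AddCommGroup G] [AddCommGroup H]
    [Fintype G] [Fintype H]
    (hcard : Fintype.card G = Fintype.card H) (heven : Even (Fintype.card G))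
    (f : G → H) (hf : IsSemiPlanar f) :
    (incGraph f).Connected ∨
    (Nat.card (incGraph f).ConnectedComponent = 2 ∧
      ∀ c : (incGraph f).ConnectedComponent,
        Nat.card {p : G × H // (incGraph f).connectedComponentMk (Sum.inl p) = c}
          = Fintype.card G ^ 2 / 2 ∧
        Nat.card {l : G × H // (incGraph f).connectedComponentMk (Sum.inr l) = c}
          = Fintype.card G ^ 2 / 2) := by
  classical
  obtain ⟨j, hj⟩ := heven
  have hjpos : 1 ≤ j := by
    have := Fintype.card_pos (α := G); omega
  set T : Finset (G × H) :=
    Finset.univ.filter (fun l => (incGraph f).Reachable (Sum.inr l) (Sum.inr (0 : G × H)))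
    with hT
  -- lower bound on T.card
  have hTlb : 1 + (Fintype.card G - 1) * j ≤ T.card := by
    set F : Finset (G × H) := Finset.univ.biUnion
      (fun a : G => (Finset.univ.image (fun u => f (u + a) - f u)).image (fun b => (a, b)))
      with hF
    have hsub : F ⊆ T := by
      intro x hx
      rw [hF, Finset.mem_biUnion] at hx
      obtain ⟨a, _, hx⟩ := hx
      rw [Finset.mem_image] at hx
      obtain ⟨b, hb, rfl⟩ := hx
      rw [Finset.mem_image] at hb
      obtain ⟨u, _, rfl⟩ := hb
      rw [hT, Finset.mem_filter]
      exact ⟨Finset.mem_univ _, diff_reach f a u⟩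
    have hdisj : ∀ a ∈ (Finset.univ : Finset G), ∀ a' ∈ (Finset.univ : Finset G), a ≠ a' →
        Disjoint ((Finset.univ.image (fun u => f (u + a) - f u)).image (fun b => (a, b)))
          ((Finset.univ.image (fun u => f (u + a') - f u)).image (fun b => (a', b))) := by
      intro a _ a' _ hne
      rw [Finset.disjoint_left]
      intro x hx hx'
      rw [Finset.mem_image] at hx hx'
      obtain ⟨b, _, rfl⟩ := hx
      obtain ⟨b', _, h⟩ := hx'
      exact hne (congrArg Prod.fst h).symm
    have hFcard : F.card = 1 + (Fintype.card G - 1) * j := by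
      rw [hF, Finset.card_biUnion hdisj]
      have hterm : ∀ a : G,
          ((Finset.univ.image (fun u => f (u + a) - f u)).image (fun b => ((a, b) : G × H))).card
            = (Finset.univ.image (fun u => f (u + a) - f u)).card := by
        intro a
        exact Finset.card_image_of_injective _ (fun b b' h => (Prod.mk.injEq _ _ _ _).mp h |>.2)
      rw [Finset.sum_congr rfl (fun a _ => hterm a)]
      rw [← Finset.add_sum_erase _ _ (Finset.mem_univ (0 : G))]
      have h0 : (Finset.univ.image (fun u => f (u + 0) - f u)).card = 1 := by
        have : (Finset.univ.image (fun u : G => f (u + 0) - f u)) = {0} := by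
          ext y
          simp [eq_comm]
        rw [this, Finset.card_singleton]
      have hrest : ∀ a ∈ Finset.univ.erase (0 : G),
          (Finset.univ.image (fun u => f (u + a) - f u)).card = j := by
        intro a ha
        have ha0 : a ≠ 0 := (Finset.mem_erase.mp ha).1
        have := image_card_eq f hf a ha0
        omega
      rw [h0, Finset.sum_congr rfl hrest, Finset.sum_const, smul_eq_mul,
        Finset.card_erase_of_mem (Finset.mem_univ _), Finset.card_univ]
    calc 1 + (Fintype.card G - 1) * j = F.card := hFcard.symm
      _ ≤ T.card := Finset.card_le_card hsub
  -- connected components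
  haveI : Fintype ((incGraph f).ConnectedComponent) := Fintype.ofFinite _
  have fiber_line : ∀ l₀ : G × H,
      Nat.card {l : G × H // (incGraph f).connectedComponentMk (Sum.inr l)
        = (incGraph f).connectedComponentMk (Sum.inr l₀)} = T.card := by
    intro l₀
    have e1 : {l : G × H // (incGraph f).connectedComponentMk (Sum.inr l)
        = (incGraph f).connectedComponentMk (Sum.inr l₀)} ≃ {l : G × H // l - l₀ ∈ T} := by
      apply Equiv.subtypeEquivRight
      intro l
      rw [SimpleGraph.ConnectedComponent.eq, reach_sub_iff]
      simp [hT]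
    have e2 : {l : G × H // l - l₀ ∈ T} ≃ {x : G × H // x ∈ T} :=
      (Equiv.subRight l₀).subtypeEquiv (fun l => by simp)
    rw [Nat.card_congr (e1.trans e2), Nat.card_eq_finsetCard]
  have surj : ∀ c : (incGraph f).ConnectedComponent,
      ∃ l₀ : G × H, (incGraph f).connectedComponentMk (Sum.inr l₀) = c := by
    intro c
    refine SimpleGraph.ConnectedComponent.ind (fun v => ?_) c
    cases v with
    | inl p =>
      exact ⟨(p.1, p.2 - f 0), SimpleGraph.ConnectedComponent.eq.mpr (point_line_reach f p).symm⟩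
    | inr l => exact ⟨l, rfl⟩
  have total : Fintype.card G * Fintype.card G
      = Fintype.card ((incGraph f).ConnectedComponent) * T.card := by
    have h1 : (Finset.univ : Finset (G × H)).card =
        ∑ c : (incGraph f).ConnectedComponent,
          (Finset.univ.filter (fun l : G × H =>
            (incGraph f).connectedComponentMk (Sum.inr l) = c)).card :=
      Finset.card_eq_sum_card_fiberwise (fun l _ => Finset.mem_univ _)
    have h2 : ∀ c : (incGraph f).ConnectedComponent,
        (Finset.univ.filter (fun l : G × H =>
          (incGraph f).connectedComponentMk (Sum.inr l) = c)).card = T.card := by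
      intro c
      obtain ⟨l₀, rfl⟩ := surj c
      rw [← fiber_line l₀, Nat.card_eq_fintype_card, Fintype.card_subtype]
    rw [Finset.card_univ, Fintype.card_prod, ← hcard] at h1
    rw [h1, Finset.sum_congr rfl (fun c _ => h2 c), Finset.sum_const, smul_eq_mul,
      Finset.card_univ]
  have hm1 : 1 ≤ Fintype.card ((incGraph f).ConnectedComponent) :=
    Fintype.card_pos_iff.mpr ⟨(incGraph f).connectedComponentMk (Sum.inr (0 : G × H))⟩
  have hm2 : Fintype.card ((incGraph f).ConnectedComponent) ≤ 2 := by
    by_contra hgt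
    push_neg at hgt
    have h3 : 3 ≤ Fintype.card ((incGraph f).ConnectedComponent) := hgt
    have hTub : Fintype.card ((incGraph f).ConnectedComponent) * T.card
        ≤ Fintype.card G * Fintype.card G := le_of_eq total.symm
    have h3T : 3 * T.card ≤ Fintype.card G * Fintype.card G :=
      le_trans (Nat.mul_le_mul_right _ h3) hTub
    have hs : Fintype.card G * Fintype.card G = 4 * (j * j) := by rw [hj]; ring
    have hs2 : Fintype.card G * j = 2 * (j * j) := by rw [hj]; ring
    have hksub : (Fintype.card G - 1) * j = Fintype.card G * j - j := by
      rw [Nat.sub_mul, one_mul]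
    have hq : 3 * j ≤ 2 * (j * j) + 1 := by nlinarith
    rw [hs] at h3T
    rw [hksub, hs2] at hTlb
    omega
  have hcases : Fintype.card ((incGraph f).ConnectedComponent) = 1 ∨
      Fintype.card ((incGraph f).ConnectedComponent) = 2 := by omega
  rcases hcases with hm | hm
  · -- connected
    left
    have hsub : Subsingleton ((incGraph f).ConnectedComponent) :=
      Fintype.card_le_one_iff_subsingleton.mp (le_of_eq hm)
    rw [SimpleGraph.connected_iff]
    refine ⟨fun u v => ?_, ⟨Sum.inr (0 : G × H)⟩⟩
    exact SimpleGraph.ConnectedComponent.eq.mp (Subsingleton.elim _ _)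
  · -- two components
    right
    have hn : 2 * T.card = Fintype.card G * Fintype.card G := by rw [total, hm]
    have hline : ∀ c : (incGraph f).ConnectedComponent,
        Nat.card {l : G × H // (incGraph f).connectedComponentMk (Sum.inr l) = c}
          = Fintype.card G ^ 2 / 2 := by
      intro c
      obtain ⟨l₀, rfl⟩ := surj c
      rw [fiber_line l₀]
      have hpow : Fintype.card G ^ 2 = Fintype.card G * Fintype.card G := pow_two _
      omega
    refine ⟨by rw [Nat.card_eq_fintype_card, hm], fun c => ⟨?_, hline c⟩⟩
    rw [← hline c]
    apply Nat.card_congr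
    refine Equiv.subtypeEquiv ((Equiv.refl G).prodCongr (Equiv.subRight (f 0))) (fun p => ?_)
    have h : (incGraph f).connectedComponentMk (Sum.inl p)
        = (incGraph f).connectedComponentMk (Sum.inr (p.1, p.2 - f 0)) :=
      SimpleGraph.ConnectedComponent.eq.mpr (point_line_reach f p)
    simp only [Equiv.prodCongr_apply, Equiv.coe_refl, Prod.map, Equiv.subRight_apply, id_eq]
    rw [h]
end

section
/- Let f : G → H be a semi-planar function between finite abelian groups of the same even order k, and suppose f is a bijection and k > 2. Then the incidence graph of S(G,H;f) is connected. -/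
set_option linter.unusedSectionVars false

section AuxReach
variable {G H : Type*} [AddCommGroup G] [AddCommGroup H] (f : G → H)

/-- Two lines sharing a point are at distance two in the incidence graph. -/
lemma reach_step (a : G) (b : H) (a' : G) (b' : H) (u : G)
    (h : f (u + (a - a')) - f u = b - b') :
    (incGraph f).Reachable (Sum.inr (a, b)) (Sum.inr (a', b')) := by
  have h1 : (incGraph f).Adj (Sum.inr (a, b)) (Sum.inl (u + a, f u + b)) := by
    show Incid f (u + a, f u + b) (a, b)
    show f u + b = f (u + a - a) + b
    rw [add_sub_cancel_right]
  have h2 : (incGraph f).Adj (Sum.inl (u + a, f u + b)) (Sum.inr (a', b')) := by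
    show Incid f (u + a, f u + b) (a', b')
    show f u + b = f (u + a - a') + b'
    rw [add_sub_assoc, sub_eq_iff_eq_add'.mp h]
    abel
  exact h1.reachable.trans h2.reachable

/-- Translation by `t` in the second coordinate is a graph homomorphism. -/
def homT (t : H) : incGraph f →g incGraph f where
  toFun := Sum.map (fun p => (p.1, p.2 + t)) (fun l => (l.1, l.2 + t))
  map_rel' := by
    intro v w h
    cases v with
    | inl p =>
      cases w with
      | inl q => exact h.elim
      | inr l =>
        have hh : p.2 = f (p.1 - l.1) + l.2 := h
        show p.2 + t = f (p.1 - l.1) + (l.2 + t)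
        rw [hh]; abel
    | inr l =>
      cases w with
      | inl p =>
        have hh : p.2 = f (p.1 - l.1) + l.2 := h
        show p.2 + t = f (p.1 - l.1) + (l.2 + t)
        rw [hh]; abel
      | inr q => exact h.elim

lemma reach_translate (t c : H)
    (h : (incGraph f).Reachable (Sum.inr ((0:G), c)) (Sum.inr ((0:G), (0:H)))) :
    (incGraph f).Reachable (Sum.inr ((0:G), c + t)) (Sum.inr ((0:G), t)) := by
  have := h.map (homT f t)
  have e2 : (Sum.inr ((0:G), (0:H) + t) : (G × H) ⊕ (G × H)) = Sum.inr ((0:G), t) := by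
    rw [zero_add]
  exact e2 ▸ this

end AuxReach

section Count
variable {G H : Type*} [AddCommGroup G] [AddCommGroup H] [Fintype G] [Fintype H]
  [DecidableEq H] (f : G → H)

/-- The finite set of differences `f (u + d) - f u`. -/
def Dfin (d : G) : Finset H := Finset.image (fun u => f (u + d) - f u) Finset.univ

lemma mem_Dfin {d : G} {c : H} : c ∈ Dfin f d ↔ ∃ u, f (u + d) - f u = c := by
  simp [Dfin]

lemma Dfin_nonempty (d : G) : (Dfin f d).Nonempty :=
  ⟨f (0 + d) - f 0, (mem_Dfin f).mpr ⟨0, rfl⟩⟩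

lemma Dfin_card (hf : IsSemiPlanar f) {d : G} (hd : d ≠ 0) :
    2 * (Dfin f d).card = Fintype.card G := by
  have h1 : (Finset.univ : Finset G).card =
      ∑ c ∈ Finset.univ.image (fun u => f (u + d) - f u),
        (Finset.univ.filter fun u => f (u + d) - f u = c).card :=
    Finset.card_eq_sum_card_image _ _
  have h2 : ∀ c ∈ Dfin f d, (Finset.univ.filter fun u => f (u + d) - f u = c).card = 2 := by
    intro c hc
    have hnc : Nat.card {x : G // f (x + d) - f x = c} =
        (Finset.univ.filter fun u => f (u + d) - f u = c).card := by
      rw [Nat.card_eq_fintype_card, Fintype.card_subtype]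
    obtain ⟨u, hu⟩ := (mem_Dfin f).mp hc
    have hpos : 0 < (Finset.univ.filter fun u => f (u + d) - f u = c).card :=
      Finset.card_pos.mpr ⟨u, by simp [hu]⟩
    rcases hf d hd c with h | h <;> omega
  calc 2 * (Dfin f d).card = ∑ _c ∈ Dfin f d, 2 := by
        rw [Finset.sum_const, smul_eq_mul, mul_comm]
    _ = ∑ c ∈ Dfin f d, (Finset.univ.filter fun u => f (u + d) - f u = c).card :=
        (Finset.sum_congr rfl h2).symm
    _ = Fintype.card G := by rw [← Finset.card_univ, h1]; rfl

lemma zero_not_mem_Dfin (hinj : Function.Injective f) {d : G} (hd : d ≠ 0) :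
    (0 : H) ∉ Dfin f d := by
  intro h0
  obtain ⟨u, hu⟩ := (mem_Dfin f).mp h0
  rw [sub_eq_zero] at hu
  exact hd (by simpa using hinj hu)

lemma Dfin_cover (hsurj : Function.Surjective f) {c : H} (hc : c ≠ 0) :
    ∃ d : G, d ≠ 0 ∧ c ∈ Dfin f d := by
  obtain ⟨v, hv⟩ := hsurj (c + f 0)
  refine ⟨v, ?_, (mem_Dfin f).mpr ⟨0, by rw [zero_add, hv]; abel⟩⟩
  rintro rfl
  apply hc
  have : f 0 = c + f 0 := hv
  have := sub_eq_zero.mpr this.symm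
  simpa using this

/-- The subgroup generated by all differences of elements of the `Dfin f d` is all of `H`. -/
lemma Ktop (hcard : Fintype.card G = Fintype.card H) (hf : IsSemiPlanar f)
    (hbij : Function.Bijective f) (hk : 2 < Fintype.card G) :
    AddSubgroup.closure
      {c : H | ∃ d : G, d ≠ 0 ∧ ∃ c₁ ∈ Dfin f d, ∃ c₂ ∈ Dfin f d, c = c₁ - c₂} = ⊤ := by
  classical
  set K : AddSubgroup H := AddSubgroup.closure
    {c : H | ∃ d : G, d ≠ 0 ∧ ∃ c₁ ∈ Dfin f d, ∃ c₂ ∈ Dfin f d, c = c₁ - c₂} with hK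
  by_contra hne
  have hsubK : ∀ d : G, d ≠ 0 → ∀ c₁ ∈ Dfin f d, ∀ c₂ ∈ Dfin f d, c₁ - c₂ ∈ K :=
    fun d hd c₁ h1 c₂ h2 => AddSubgroup.subset_closure ⟨d, hd, c₁, h1, c₂, h2, rfl⟩
  have hKfin : (K : Set H).toFinset.card = Nat.card K := by
    rw [Set.toFinset_card, Nat.card_eq_fintype_card]
    rfl
  -- upper bound : 2 * Nat.card K ≤ Fintype.card H
  have hdvd : Nat.card K ∣ Nat.card H := AddSubgroup.card_addSubgroup_dvd_card K
  have hlt : Nat.card K < Nat.card H := by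
    have hle : Nat.card K ≤ Nat.card H :=
      Nat.le_of_dvd (by simp [Nat.card_eq_fintype_card, Fintype.card_pos]) hdvd
    rcases lt_or_eq_of_le hle with h | h
    · exact h
    · exact absurd (AddSubgroup.eq_top_of_card_eq K h) hne
  have hcpos : 0 < Nat.card K := Nat.card_pos
  have h2K : 2 * Nat.card K ≤ Nat.card H := by
    obtain ⟨q, hq⟩ := hdvd
    have hq2 : 2 ≤ q := by
      by_contra hq2
      interval_cases q <;> omega
    calc 2 * Nat.card K ≤ q * Nat.card K := Nat.mul_le_mul_right _ hq2
      _ = Nat.card H := by rw [mul_comm]; exact hq.symm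
  -- lower bound: (Dfin f d).card ≤ Nat.card K
  have hcardD : ∀ d : G, d ≠ 0 → (Dfin f d).card ≤ Nat.card K := by
    intro d hd
    obtain ⟨cd, hcd⟩ := Dfin_nonempty f d
    have hsub : (Dfin f d).image (fun c => c - cd) ⊆ (K : Set H).toFinset := by
      intro x hx
      obtain ⟨c, hc, rfl⟩ := Finset.mem_image.mp hx
      rw [Set.mem_toFinset]
      exact hsubK d hd c hc cd hcd
    calc (Dfin f d).card = ((Dfin f d).image (fun c => c - cd)).card :=
          (Finset.card_image_of_injective _ (sub_left_injective)).symm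
      _ ≤ (K : Set H).toFinset.card := Finset.card_le_card hsub
      _ = Nat.card K := hKfin
  -- get a nonzero element of K
  obtain ⟨d₀, hd₀⟩ := Fintype.exists_ne_of_one_lt_card (by omega) (0 : G)
  have hD0 := Dfin_card f hf hd₀
  have hcH : Nat.card H = Fintype.card H := Nat.card_eq_fintype_card
  have hKcard : Nat.card K = (Dfin f d₀).card := by
    have := hcardD d₀ hd₀
    omega
  have hK2 : 2 ≤ Nat.card K := by omega
  obtain ⟨t, ht⟩ := Fintype.exists_ne_of_one_lt_card
    (by rw [← Nat.card_eq_fintype_card]; omega) (⟨0, K.zero_mem⟩ : K)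
  have htne : (t : H) ≠ 0 := fun h => ht (Subtype.ext h)
  obtain ⟨d, hd, htD⟩ := Dfin_cover f hbij.2 htne
  -- all of Dfin f d lies in K
  have hDK : Dfin f d ⊆ (K : Set H).toFinset := by
    intro c hc
    rw [Set.mem_toFinset]
    have h1 : c - (t : H) ∈ K := hsubK d hd c hc _ htD
    have := K.add_mem h1 t.2
    simpa using this
  have hcards : (K : Set H).toFinset.card ≤ (Dfin f d).card := by
    have := Dfin_card f hf hd
    omega
  have heq : Dfin f d = (K : Set H).toFinset := Finset.eq_of_subset_of_card_le hDK hcards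
  have : (0 : H) ∈ Dfin f d := by
    rw [heq, Set.mem_toFinset]
    exact K.zero_mem
  exact zero_not_mem_Dfin f hbij.1 hd this

end Count

/-- If `f` is a bijective semi-planar function between finite abelian groups of the
same even order `k > 2`, then the incidence graph of `S(G,H;f)` is connected. -/
theorem connected_of_bijective {G H : Type*} [AddCommGroup G] [AddCommGroup H]
    [Fintype G] [Fintype H]
    (hcard : Fintype.card G = Fintype.card H) (heven : Even (Fintype.card G))
    (f : G → H) (hf : IsSemiPlanar f)
    (hbij : Function.Bijective f) (hk : 2 < Fintype.card G) :
    (incGraph f).Connected := by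
  classical
  -- Every "vertical" line L(0,c) is reachable from L(0,0).
  have hlines0 : ∀ c : H,
      (incGraph f).Reachable (Sum.inr ((0:G), c)) (Sum.inr ((0:G), (0:H))) := by
    intro c
    have hc : c ∈ AddSubgroup.closure
        {c : H | ∃ d : G, d ≠ 0 ∧ ∃ c₁ ∈ Dfin f d, ∃ c₂ ∈ Dfin f d, c = c₁ - c₂} := by
      rw [Ktop f hcard hf hbij hk]
      exact AddSubgroup.mem_top c
    induction hc using AddSubgroup.closure_induction with
    | mem x hx =>
      obtain ⟨d, hd, c₁, h1, c₂, h2, rfl⟩ := hx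
      obtain ⟨u₁, hu₁⟩ := (mem_Dfin f).mp h1
      obtain ⟨u₂, hu₂⟩ := (mem_Dfin f).mp h2
      have stepA : (incGraph f).Reachable (Sum.inr ((0:G), c₁ - c₂))
          (Sum.inr (-d, -c₂)) := by
        refine reach_step f 0 (c₁ - c₂) (-d) (-c₂) u₁ ?_
        rw [zero_sub, neg_neg, hu₁]
        abel
      have stepB : (incGraph f).Reachable (Sum.inr (-d, -c₂))
          (Sum.inr ((0:G), (0:H))) := by
        refine reach_step f (-d) (-c₂) 0 0 (u₂ + d) ?_
        have e : u₂ + d + (-d - 0) = u₂ := by abel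
        rw [e, ← neg_sub, hu₂]
        abel
      exact stepA.trans stepB
    | zero => exact SimpleGraph.Reachable.refl _
    | add x y hx hy ihx ihy => exact (reach_translate f y x ihx).trans ihy
    | neg x hx ihx =>
      have := reach_translate f (-x) x ihx
      rw [add_neg_cancel] at this
      exact this.symm
  -- Every line is reachable from L(0,0).
  have hline : ∀ l : G × H,
      (incGraph f).Reachable (Sum.inr l) (Sum.inr ((0:G), (0:H))) := by
    rintro ⟨a, b⟩
    have h1 : (incGraph f).Reachable (Sum.inr (a, b))
        (Sum.inr ((0:G), b - (f (0 + a) - f 0))) := by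
      refine reach_step f a b 0 (b - (f (0 + a) - f 0)) 0 ?_
      rw [sub_zero]
      abel
    exact h1.trans (hlines0 _)
  -- Every point is reachable from L(0,0).
  have hpt : ∀ p : G × H,
      (incGraph f).Reachable (Sum.inl p) (Sum.inr ((0:G), (0:H))) := by
    rintro ⟨x, y⟩
    have hadj : (incGraph f).Adj (Sum.inl (x, y)) (Sum.inr (x, y - f 0)) := by
      show Incid f (x, y) (x, y - f 0)
      show y = f (x - x) + (y - f 0)
      rw [sub_self]
      abel
    exact hadj.reachable.trans (hline _)
  have hall : ∀ w, (incGraph f).Reachable w (Sum.inr ((0:G), (0:H))) := by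
    intro w
    cases w with
    | inl p => exact hpt p
    | inr l => exact hline l
  have : Nonempty ((G × H) ⊕ (G × H)) := ⟨Sum.inr ((0:G), (0:H))⟩
  exact SimpleGraph.Connected.mk fun u v => (hall u).trans (hall v).symm
end

section
/- Let f : G → H be a semi-planar function between finite abelian groups of the same even order k. For each nonzero a ∈ G and each b ∈ H, the set S(a,b) = {t ∈ G : f(t − a) = f(t) + b} has exactly 2 elements if and only if for every d ∈ H and every integer α the lines L(α•a, d+b) and L((α+1)•a, d) have a common point, i.e., there exists x ∈ G with f(x − α•a) + d + b = f(x − (α+1)•a) + d. -/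
/-- For nonzero `a : G` and `b : H`, the set `S(a,b) = {t : G | f(t-a) = f(t)+b}` has
exactly two elements iff for every `d : H` and every integer `α` the lines
`L(α•a, d+b)` and `L((α+1)•a, d)` have a common point. -/
theorem card_S_eq_two_iff {G H : Type*} [AddCommGroup G] [AddCommGroup H]
    [Fintype G] [Fintype H]
    (hcard : Fintype.card G = Fintype.card H) (heven : Even (Fintype.card G))
    (f : G → H) (hf : IsSemiPlanar f) (a : G) (ha : a ≠ 0) (b : H) :
    Nat.card {t : G // f (t - a) = f t + b} = 2 ↔
      ∀ d : H, ∀ α : ℤ, ∃ x : G,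
        f (x - α • a) + d + b = f (x - (α + 1) • a) + d := by
  have key : Nat.card {t : G // f (t - a) = f t + b} =
      Nat.card {x : G // f (x + a) - f x = -b} := by
    apply Nat.card_congr
    exact
      { toFun := fun t => ⟨t.1 - a, by have := t.2; rw [sub_add_cancel]; rw [this]; abel⟩
        invFun := fun x => ⟨x.1 + a, by
          have := x.2
          rw [add_sub_cancel_right]
          have h2 : f (x.1 + a) = f x.1 - b := by
            have := sub_eq_iff_eq_add.mp this
            rw [this]; abel
          rw [h2]; abel⟩
        left_inv := fun t => by ext; simp
        right_inv := fun x => by ext; simp }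
  constructor
  · intro h2 d α
    have hpos : 0 < Nat.card {t : G // f (t - a) = f t + b} := by omega
    obtain ⟨t, ht⟩ := (Nat.card_pos_iff.mp hpos).1
    refine ⟨t + α • a, ?_⟩
    have h1 : t + α • a - α • a = t := by abel
    have h2' : t + α • a - (α + 1) • a = t - a := by
      rw [add_smul, one_smul]; abel
    rw [h1, h2', ht]; abel
  · intro h
    obtain ⟨x, hx⟩ := h 0 0
    simp only [zero_smul, sub_zero, zero_add, one_smul, add_zero] at hx
    have hne : Nat.card {t : G // f (t - a) = f t + b} ≠ 0 := by
      have : Nonempty {t : G // f (t - a) = f t + b} := ⟨⟨x, by rw [hx]⟩⟩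
      simp [Nat.card_pos.ne']
    rcases hf a ha (-b) with h0 | h2
    · rw [key] at hne; omega
    · rw [key, h2]
end

section
/- Let f : G → H be a semi-planar function between finite abelian groups of the same even order k > 2, and suppose the incidence graph of S(G,H;f) is not connected. Then for every nonzero a ∈ G: P_a^1 = {b ∈ H : the set S(a,b) has exactly 2 elements} and P_a^2 = {b ∈ H : S(a,b) is empty}. -/
namespace SPAux

variable {G H : Type*} [AddCommGroup G] [AddCommGroup H]

/-- The set of "difference vectors" of lines sharing a point. -/
def Dset (f : G → H) : Set (G × H) := {v | ∃ x : G, f (x + v.1) - f x = v.2}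

/-- The subgroup of `G × H` generated by `Dset f`. -/
def Kgrp (f : G → H) : AddSubgroup (G × H) := AddSubgroup.closure (Dset f)

lemma mem_Dset_of_incid (f : G → H) {p l l' : G × H}
    (h : Incid f p l) (h' : Incid f p l') : l' - l ∈ Dset f := by
  refine ⟨p.1 - l'.1, ?_⟩
  have e1 : p.1 - l'.1 + (l' - l).1 = p.1 - l.1 := by
    simp only [Prod.fst_sub]; abel
  rw [e1, Prod.snd_sub]
  rw [sub_eq_sub_iff_add_eq_add]
  rw [add_comm l'.2]
  exact h.symm.trans h'

lemma reachable_add_of_mem_Dset (f : G → H) (l : G × H) {v : G × H} (hv : v ∈ Dset f) :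
    (incGraph f).Reachable (Sum.inr l) (Sum.inr (l + v)) := by
  obtain ⟨x, hx⟩ := hv
  set p : G × H := (x + v.1 + l.1, f (x + v.1) + l.2) with hp
  have h1 : (incGraph f).Adj (Sum.inr l) (Sum.inl p) := by
    show Incid f p l
    show f (x + v.1) + l.2 = f (x + v.1 + l.1 - l.1) + l.2
    rw [add_sub_cancel_right]
  have h2 : (incGraph f).Adj (Sum.inl p) (Sum.inr (l + v)) := by
    show Incid f p (l + v)
    show f (x + v.1) + l.2 = f (x + v.1 + l.1 - (l + v).1) + (l + v).2
    have e : x + v.1 + l.1 - (l + v).1 = x := by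
      simp only [Prod.fst_add]; abel
    rw [e, Prod.snd_add, ← hx]
    abel
  exact h1.reachable.trans h2.reachable

/-- Invariant along walks: lines are in `Kgrp`, points are on a line of `Kgrp`. -/
def Inv (f : G → H) : (G × H) ⊕ (G × H) → Prop
  | Sum.inl p => ∃ l, Incid f p l ∧ l ∈ Kgrp f
  | Sum.inr l => l ∈ Kgrp f

lemma inv_of_walk (f : G → H) {v u : (G × H) ⊕ (G × H)}
    (w : (incGraph f).Walk v u) (hu : Inv f u) : Inv f v := by
  induction w with
  | nil => exact hu
  | @cons v m u h _ ih =>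
    have hm := ih hu
    match v, m, h with
    | Sum.inl p, Sum.inr l, h =>
      exact ⟨l, h, hm⟩
    | Sum.inr l, Sum.inl p, h =>
      obtain ⟨l₀, h₀, hK⟩ := hm
      have hd : l - l₀ ∈ Dset f := mem_Dset_of_incid f h₀ h
      have : l = l₀ + (l - l₀) := by abel
      rw [this]
      exact add_mem hK (AddSubgroup.subset_closure hd)

lemma inS1_iff_mem (f : G → H) (l : G × H) : InS1 f l ↔ l ∈ Kgrp f := by
  constructor
  · intro h
    obtain ⟨w⟩ := h
    exact inv_of_walk f w ((Kgrp f).zero_mem)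
  · intro h
    have main : ∀ g ∈ Kgrp f, ∀ m : G × H,
        ((incGraph f).Reachable (Sum.inr m) (Sum.inr ((0 : G), (0 : H))) ↔
         (incGraph f).Reachable (Sum.inr (m + g)) (Sum.inr ((0 : G), (0 : H)))) := by
      intro g hg
      induction hg using AddSubgroup.closure_induction with
      | mem v hv =>
        intro m
        have R := reachable_add_of_mem_Dset f m hv
        exact ⟨fun r => R.symm.trans r, fun r => R.trans r⟩
      | zero => intro m; rw [add_zero]
      | add x y hx hy ihx ihy =>
        intro m
        rw [← add_assoc]
        exact (ihx m).trans (ihy (m + x))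
      | neg x hx ihx =>
        intro m
        have := ihx (m + -x)
        rw [neg_add_cancel_right] at this
        exact this.symm
    have h0 : (incGraph f).Reachable (Sum.inr ((0 : G), (0 : H))) (Sum.inr ((0 : G), (0 : H))) :=
      SimpleGraph.Reachable.refl _
    have := (main l h (0 : G × H)).mp h0
    rwa [zero_add] at this

lemma connected_of_top (f : G → H) (h : Kgrp f = ⊤) : (incGraph f).Connected := by
  rw [SimpleGraph.connected_iff]
  refine ⟨?_, ⟨Sum.inr (0 : G × H)⟩⟩
  have hs : ∀ w, (incGraph f).Reachable w (Sum.inr ((0 : G), (0 : H))) := by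
    intro w
    match w with
    | Sum.inr l => exact (inS1_iff_mem f l).mpr (h ▸ AddSubgroup.mem_top l)
    | Sum.inl p =>
      have adj : (incGraph f).Adj (Sum.inl p) (Sum.inr ((0 : G), p.2 - f p.1)) := by
        show Incid f p _
        show p.2 = f (p.1 - 0) + (p.2 - f p.1)
        rw [sub_zero, add_sub_cancel]
      exact adj.reachable.trans
        ((inS1_iff_mem f _).mpr (h ▸ AddSubgroup.mem_top _))
  intro u v
  exact (hs u).trans (hs v).symm

/-- The subgroup `N ≤ H` of second coordinates of `Kgrp` elements over `0`. -/
def Ngrp (f : G → H) : AddSubgroup H where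
  carrier := {b | ((0 : G), b) ∈ Kgrp f}
  zero_mem' := (Kgrp f).zero_mem
  add_mem' := by
    intro x y hx hy
    have : ((0:G), x) + ((0:G), y) ∈ Kgrp f := add_mem hx hy
    simpa using this
  neg_mem' := by
    intro x hx
    have : -((0:G), x) ∈ Kgrp f := neg_mem hx
    simpa using this

lemma mem_Kgrp_iff (f : G → H) (a : G) (b : H) :
    (a, b) ∈ Kgrp f ↔ b - (f a - f 0) ∈ Ngrp f := by
  have hgen : (a, f a - f 0) ∈ Kgrp f :=
    AddSubgroup.subset_closure ⟨0, by rw [zero_add]⟩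
  constructor
  · intro h
    have hs := sub_mem h hgen
    have : ((a, b) : G × H) - (a, f a - f 0) = (0, b - (f a - f 0)) := by
      rw [Prod.mk_sub_mk, sub_self]
    rwa [this] at hs
  · intro h
    have hs := add_mem hgen h
    have : ((a, f a - f 0) : G × H) + (0, b - (f a - f 0)) = (a, b) := by
      rw [Prod.mk_add_mk, add_zero, add_sub_cancel]
    rwa [this] at hs

lemma Ngrp_eq_top_of_Kgrp_eq_top (f : G → H) (h : Ngrp f = ⊤) : Kgrp f = ⊤ := by
  rw [AddSubgroup.eq_top_iff']
  intro x
  have : (x.1, x.2) ∈ Kgrp f := (mem_Kgrp_iff f x.1 x.2).mpr (h ▸ AddSubgroup.mem_top _)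
  simpa using this


section Counting

variable [Fintype G] [Fintype H]

def Bset (f : G → H) (a : G) : Set H := {b | ∃ x : G, f (x + a) - f x = b}

lemma Bset_subset (f : G → H) (a : G) : Bset f a ⊆ {b : H | (a, b) ∈ Kgrp f} :=
  fun _ ⟨x, hx⟩ => AddSubgroup.subset_closure ⟨x, hx⟩

lemma card_G_eq (f : G → H) (hf : IsSemiPlanar f) {a : G} (ha : a ≠ 0) :
    Fintype.card G = 2 * Nat.card (Bset f a) := by
  classical
  have key : ∀ y : H, Nat.card {x : G // f (x + a) - f x = y} =
      (Finset.univ.filter (fun x : G => f (x + a) - f x = y)).card := by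
    intro y
    rw [Nat.card_eq_fintype_card, Fintype.card_subtype]
  have h1 : Fintype.card G =
      ∑ y : H, (Finset.univ.filter (fun x : G => f (x + a) - f x = y)).card := by
    rw [← Finset.card_univ]
    exact Finset.card_eq_sum_card_fiberwise (fun x _ => Finset.mem_univ _)
  have h2 : ∀ y : H, (Finset.univ.filter (fun x : G => f (x + a) - f x = y)).card
      = if y ∈ Bset f a then 2 else 0 := by
    intro y
    by_cases hy : y ∈ Bset f a
    · rw [if_pos hy]
      rcases hf a ha y with h | h
      · exfalso
        obtain ⟨x, hx⟩ := hy
        rw [key y, Finset.card_eq_zero] at h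
        have hmem : x ∈ Finset.univ.filter (fun x : G => f (x + a) - f x = y) := by
          simp [hx]
        rw [h] at hmem
        exact absurd hmem (Finset.notMem_empty x)
      · rw [← key y]; exact h
    · rw [if_neg hy, Finset.card_eq_zero, Finset.filter_eq_empty_iff]
      intro x _
      exact fun hx => hy ⟨x, hx⟩
  have h3 : Nat.card (Bset f a) = (Finset.univ.filter (fun b : H => b ∈ Bset f a)).card := by
    rw [Nat.card_eq_fintype_card]
    exact Fintype.card_subtype _
  rw [h1, Finset.sum_congr rfl (fun y _ => h2 y), ← Finset.sum_filter,
    Finset.sum_const, smul_eq_mul, h3, mul_comm]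

lemma card_slice (f : G → H) (a : G) :
    Nat.card {b : H | (a, b) ∈ Kgrp f} = Nat.card (Ngrp f) := by
  refine Nat.card_congr ⟨fun b => ⟨b.1 - (f a - f 0), (mem_Kgrp_iff f a b.1).mp b.2⟩,
    fun n => ⟨n.1 + (f a - f 0), (mem_Kgrp_iff f a _).mpr
      (by rw [add_sub_cancel_right]; exact n.2)⟩, ?_, ?_⟩
  · intro b
    exact Subtype.ext (sub_add_cancel b.1 _)
  · intro n
    exact Subtype.ext (add_sub_cancel_right n.1 _)

lemma card_Kgrp (f : G → H) :
    Nat.card (Kgrp f) = Fintype.card G * Nat.card (Ngrp f) := by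
  have e : Kgrp f ≃ G × Ngrp f :=
    ⟨fun k => (k.1.1, ⟨k.1.2 - (f k.1.1 - f 0), (mem_Kgrp_iff f k.1.1 k.1.2).mp k.2⟩),
     fun gn => ⟨(gn.1, gn.2.1 + (f gn.1 - f 0)),
       (mem_Kgrp_iff f _ _).mpr (by rw [add_sub_cancel_right]; exact gn.2.2)⟩,
     fun k => Subtype.ext (Prod.ext rfl (sub_add_cancel k.1.2 _)),
     fun gn => Prod.ext rfl (Subtype.ext (add_sub_cancel_right gn.2.1 _))⟩
  rw [Nat.card_congr e, Nat.card_prod, Nat.card_eq_fintype_card]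

lemma cardH_eq (f : G → H) (hf : IsSemiPlanar f) (hcard : Fintype.card G = Fintype.card H)
    (hK : Kgrp f ≠ ⊤) {a : G} (ha : a ≠ 0) :
    Fintype.card H = 2 * Nat.card (Ngrp f) := by
  have h2B := card_G_eq f hf ha
  have hmono : Nat.card (Bset f a) ≤ Nat.card (Ngrp f) := by
    rw [← card_slice f a]
    exact Nat.card_mono (Set.toFinite _) (Bset_subset f a)
  have hN : Ngrp f ≠ ⊤ := fun h => hK (Ngrp_eq_top_of_Kgrp_eq_top f h)
  have hdvd : Nat.card (Ngrp f) ∣ Fintype.card H := by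
    simpa [Nat.card_eq_fintype_card] using AddSubgroup.card_addSubgroup_dvd_card (Ngrp f)
  have hlt : Nat.card (Ngrp f) < Fintype.card H := by
    rcases lt_or_eq_of_le (Nat.le_of_dvd Fintype.card_pos hdvd) with h | h
    · exact h
    · exact absurd (AddSubgroup.eq_top_of_card_eq _ (by rw [h, Nat.card_eq_fintype_card])) hN
  have hpos : 0 < Nat.card (Ngrp f) := Nat.card_pos
  have hge : Fintype.card H ≤ 2 * Nat.card (Ngrp f) := by
    rw [← hcard, h2B]
    exact Nat.mul_le_mul_left 2 hmono
  obtain ⟨m, hm⟩ := hdvd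
  rw [hm] at hlt hge
  have h1 : 1 < m := by
    by_contra hcon
    push_neg at hcon
    have hle : Nat.card (Ngrp f) * m ≤ Nat.card (Ngrp f) * 1 :=
      Nat.mul_le_mul_left _ hcon
    rw [mul_one] at hle
    exact absurd (lt_of_lt_of_le hlt hle) (lt_irrefl _)
  have h2' : m ≤ 2 := by
    refine Nat.le_of_mul_le_mul_left ?_ hpos
    rw [mul_comm 2 _] at hge
    exact hge
  have hm2 : m = 2 := le_antisymm h2' h1
  rw [hm, hm2, mul_comm]

lemma slice_eq_Bset (f : G → H) (hf : IsSemiPlanar f) (hcard : Fintype.card G = Fintype.card H)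
    (hK : Kgrp f ≠ ⊤) {a : G} (ha : a ≠ 0) :
    {b : H | (a, b) ∈ Kgrp f} = Bset f a := by
  have h2B := card_G_eq f hf ha
  have h2N := cardH_eq f hf hcard hK ha
  have hle : ({b : H | (a, b) ∈ Kgrp f} : Set H).ncard ≤ (Bset f a).ncard := by
    rw [← Nat.card_coe_set_eq, ← Nat.card_coe_set_eq, card_slice f a]
    omega
  exact (Set.eq_of_subset_of_ncard_le (Bset_subset f a) hle (Set.toFinite _)).symm

lemma two_smul_mem (f : G → H) (h2 : Fintype.card H = 2 * Nat.card (Ngrp f)) (b : H) :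
    b + b ∈ Ngrp f := by
  have hq : Nat.card (H ⧸ Ngrp f) = 2 := by
    have hc := AddSubgroup.card_eq_card_quotient_mul_card_addSubgroup (Ngrp f)
    have hpos : 0 < Nat.card (Ngrp f) := Nat.card_pos
    rw [Nat.card_eq_fintype_card] at hc
    rw [h2] at hc
    exact Nat.eq_of_mul_eq_mul_right hpos (by omega)
  have hz : Nat.card (H ⧸ Ngrp f) • ((b : H ⧸ Ngrp f)) = 0 := card_nsmul_eq_zero'
  rw [hq, two_nsmul] at hz
  have : ((b + b : H) : H ⧸ Ngrp f) = 0 := by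
    rw [QuotientAddGroup.mk_add]; exact hz
  exact (QuotientAddGroup.eq_zero_iff _).mp this

lemma mem_Kgrp_neg_iff (f : G → H) (h2 : ∀ b : H, b + b ∈ Ngrp f) (a : G) (b : H) :
    (a, b) ∈ Kgrp f ↔ (-a, b) ∈ Kgrp f := by
  have key : ∀ (a : G) (b : H), (a, b) ∈ Kgrp f → (-a, b) ∈ Kgrp f := by
    intro a b h
    have h1 : (-(a, b) : G × H) ∈ Kgrp f := neg_mem h
    have h0 : ((0 : G), b + b) ∈ Kgrp f := h2 b
    have hsum := add_mem h1 h0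
    have e : (-(a, b) : G × H) + ((0 : G), b + b) = (-a, b) := by
      rw [Prod.neg_mk, Prod.mk_add_mk, add_zero, neg_add_cancel_left]
    rwa [e] at hsum
  exact ⟨key a b, fun h => by simpa using key (-a) b h⟩

end Counting

end SPAux

/-- If `k > 2` and the incidence graph of `S(G,H;f)` is not connected, then for nonzero
`a : G`, `P_a^1` is the set of `b` with `|S(a,b)| = 2` and `P_a^2` is the set of `b`
with `S(a,b) = ∅`. -/
theorem Pa1_Pa2_description {G H : Type*} [AddCommGroup G] [AddCommGroup H]
    [Fintype G] [Fintype H]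
    (hcard : Fintype.card G = Fintype.card H) (heven : Even (Fintype.card G))
    (f : G → H) (hf : IsSemiPlanar f)
    (hk : 2 < Fintype.card G) (hnc : ¬ (incGraph f).Connected) :
    ∀ a : G, a ≠ 0 →
      {b : H | InS1 f (a, b)} = {b : H | Nat.card {t : G // f (t - a) = f t + b} = 2} ∧
      {b : H | ¬ InS1 f (a, b)} = {b : H | ∀ t : G, f (t - a) ≠ f t + b} := by
  intro a ha
  have hK : SPAux.Kgrp f ≠ ⊤ := fun h => hnc (SPAux.connected_of_top f h)
  have h2N := SPAux.cardH_eq f hf hcard hK ha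
  have h2 := SPAux.two_smul_mem f h2N
  have hna : (-a : G) ≠ 0 := neg_ne_zero.mpr ha
  have hslice := SPAux.slice_eq_Bset f hf hcard hK hna
  have predeq : ∀ (b : H) (t : G), (f (t + -a) - f t = b) ↔ (f (t - a) = f t + b) := by
    intro b t
    rw [← sub_eq_add_neg, sub_eq_iff_eq_add']
  have cardeq : ∀ b : H, Nat.card {x : G // f (x + -a) - f x = b} =
      Nat.card {t : G // f (t - a) = f t + b} := by
    intro b
    exact Nat.card_congr (Equiv.subtypeEquivRight (predeq b))
  have exiff : ∀ b : H, (∃ t : G, f (t - a) = f t + b) ↔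
      Nat.card {t : G // f (t - a) = f t + b} = 2 := by
    intro b
    constructor
    · intro hb
      rcases hf (-a) hna b with h0 | h2c
      · exfalso
        obtain ⟨t, ht⟩ := hb
        have hne : Nonempty {t : G // f (t - a) = f t + b} := ⟨⟨t, ht⟩⟩
        have hpos : 0 < Nat.card {t : G // f (t - a) = f t + b} :=
          Nat.card_pos_iff.mpr ⟨hne, inferInstance⟩
        rw [cardeq b] at h0
        omega
      · rw [cardeq b] at h2c
        exact h2c
    · intro hc
      have hpos : 0 < Nat.card {t : G // f (t - a) = f t + b} := by omega
      obtain ⟨⟨t, ht⟩, _⟩ := Nat.card_pos_iff.mp hpos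
      exact ⟨t, ht⟩
  have key : ∀ b : H, InS1 f (a, b) ↔ Nat.card {t : G // f (t - a) = f t + b} = 2 := by
    intro b
    rw [SPAux.inS1_iff_mem, SPAux.mem_Kgrp_neg_iff f h2 a b, ← exiff b]
    have hmem : ((-a, b) ∈ SPAux.Kgrp f) ↔ b ∈ SPAux.Bset f (-a) := by
      constructor
      · intro h; rw [← hslice]; exact h
      · intro h; have : b ∈ {b : H | (-a, b) ∈ SPAux.Kgrp f} := hslice ▸ h; exact this
    rw [hmem]
    exact exists_congr (fun t => predeq b t)
  constructor
  · ext b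
    simp only [Set.mem_setOf_eq]
    exact key b
  · ext b
    simp only [Set.mem_setOf_eq]
    rw [key b, ← exiff b]
    push_neg
    rfl
end

section
/- Let f : G → H be a semi-planar function between finite abelian groups of the same even order k > 2, and suppose the incidence graph of S(G,H;f) is not connected. If a ∈ G satisfies 0 ∈ P_a^1 (i.e., L(a,0) ∈ S_1), then P_a^1 = P_0^1 and P_a^2 = P_0^2. -/
/-- Translation by `c` in the second coordinate is a graph homomorphism of the
incidence graph. -/
def incTrans {G H : Type*} [SubtractionMonoid G] [AddCommGroup H] (f : G → H) (c : H) :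
    incGraph f →g incGraph f where
  toFun := Sum.map (fun p => (p.1, p.2 + c)) (fun l => (l.1, l.2 + c))
  map_rel' := by
    rintro (p | l) (q | m) h
    · exact h.elim
    · show Incid f (p.1, p.2 + c) (m.1, m.2 + c)
      have h' : Incid f p m := h
      unfold Incid at h' ⊢
      simp only at h' ⊢
      rw [h', add_assoc]
    · show Incid f (q.1, q.2 + c) (l.1, l.2 + c)
      have h' : Incid f q l := h
      unfold Incid at h' ⊢
      simp only at h' ⊢
      rw [h', add_assoc]
    · exact h.elim

lemma inS1_trans_iff {G H : Type*} [SubtractionMonoid G] [AddCommGroup H]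
    (f : G → H) (l₁ l₂ : G × H) (c : H) :
    (incGraph f).Reachable (Sum.inr l₁) (Sum.inr l₂) ↔
    (incGraph f).Reachable (Sum.inr (l₁.1, l₁.2 + c)) (Sum.inr (l₂.1, l₂.2 + c)) := by
  constructor
  · intro h
    exact h.map (incTrans f c)
  · intro h
    have h2 := h.map (incTrans f (-c))
    have e1 : (incTrans f (-c)) (Sum.inr (l₁.1, l₁.2 + c)) = Sum.inr l₁ := by
      show Sum.inr (l₁.1, l₁.2 + c + -c) = _
      simp
    have e2 : (incTrans f (-c)) (Sum.inr (l₂.1, l₂.2 + c)) = Sum.inr l₂ := by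
      show Sum.inr (l₂.1, l₂.2 + c + -c) = _
      simp
    rwa [e1, e2] at h2

/-- If `k > 2`, the incidence graph of `S(G,H;f)` is not connected, and `0 ∈ P_a^1`
(i.e. `L(a,0) ∈ S₁`), then `P_a^1 = P_0^1` and `P_a^2 = P_0^2`. -/
theorem Pa_eq_P0_of_zero_mem {G H : Type*} [AddCommGroup G] [AddCommGroup H]
    [Fintype G] [Fintype H]
    (hcard : Fintype.card G = Fintype.card H) (heven : Even (Fintype.card G))
    (f : G → H) (hf : IsSemiPlanar f)
    (hk : 2 < Fintype.card G) (hnc : ¬ (incGraph f).Connected)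
    (a : G) (ha : InS1 f (a, (0 : H))) :
    {b : H | InS1 f (a, b)} = {b : H | InS1 f ((0 : G), b)} ∧
    {b : H | ¬ InS1 f (a, b)} = {b : H | ¬ InS1 f ((0 : G), b)} := by
  have key : ∀ b : H, InS1 f (a, b) ↔ InS1 f ((0 : G), b) := by
    intro b
    have hab : (incGraph f).Reachable (Sum.inr (a, b)) (Sum.inr ((0 : G), b)) := by
      have := (inS1_trans_iff f (a, (0 : H)) ((0 : G), (0 : H)) b).mp ha
      simpa using this
    constructor
    · intro h
      exact hab.symm.trans h
    · intro h
      exact hab.trans h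
  constructor
  · ext b; simp [Set.mem_setOf_eq, key b]
  · ext b; simp [Set.mem_setOf_eq, key b]
end

section
/- Let f : G → H be a semi-planar function between finite abelian groups of the same even order k > 2, and suppose the incidence graph of S(G,H;f) is not connected. Then the set P_0^1 = {b ∈ H : L(0,b) ∈ S_1} is a subgroup of H of index 2, and P_0^2 = H \ P_0^1 is its nontrivial coset. -/
section Aux
variable {G H : Type*} [AddCommGroup G] [AddCommGroup H] (f : G → H)

lemma adj_pl {x a : G} {y b : H} (hyp : y = f (x - a) + b) :
    (incGraph f).Adj (Sum.inl (x, y)) (Sum.inr (a, b)) := hyp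

lemma adj_lp {x a : G} {y b : H} (hyp : y = f (x - a) + b) :
    (incGraph f).Adj (Sum.inr (a, b)) (Sum.inl (x, y)) := hyp

def trHom (h : H) : incGraph f →g incGraph f where
  toFun v := match v with
    | Sum.inl p => Sum.inl (p.1, p.2 + h)
    | Sum.inr l => Sum.inr (l.1, l.2 + h)
  map_rel' := by
    intro v w hvw
    match v, w with
    | Sum.inl p, Sum.inr l =>
        show p.2 + h = f (p.1 - l.1) + (l.2 + h)
        rw [show p.2 = f (p.1 - l.1) + l.2 from hvw, add_assoc]
    | Sum.inr l, Sum.inl p =>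
        show p.2 + h = f (p.1 - l.1) + (l.2 + h)
        rw [show p.2 = f (p.1 - l.1) + l.2 from hvw, add_assoc]

lemma InS1_translate {b : H} (h : H) (hb : InS1 f ((0:G), b)) :
    (incGraph f).Reachable (Sum.inr ((0:G), b + h)) (Sum.inr ((0:G), h)) := by
  have := hb.map (trHom f h)
  have h2 : (incGraph f).Reachable (Sum.inr ((0:G), b + h)) (Sum.inr ((0:G), (0:H) + h)) := this
  rwa [zero_add] at h2

end Aux

section Aux2
variable {G H : Type*} [AddCommGroup G] [AddCommGroup H] (f : G → H)

lemma InS1_zero : InS1 f ((0:G), (0:H)) := SimpleGraph.Reachable.refl _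

lemma InS1_add {b b' : H} (hb : InS1 f ((0:G), b)) (hb' : InS1 f ((0:G), b')) :
    InS1 f ((0:G), b + b') :=
  (InS1_translate f b' hb).trans hb'

lemma InS1_neg {b : H} (hb : InS1 f ((0:G), b)) : InS1 f ((0:G), -b) := by
  have := InS1_translate f (-b) hb
  rw [add_neg_cancel] at this
  exact this.symm

lemma InS1_diff (a x₁ x₀ : G) :
    InS1 f ((0:G), (f (x₁ + a) - f x₁) - (f (x₀ + a) - f x₀)) := by
  have A1 : (incGraph f).Adj (Sum.inr ((0:G), (f (x₁ + a) - f x₁) - (f (x₀ + a) - f x₀)))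
      (Sum.inl (x₀ + a, f x₀ + (f (x₁ + a) - f x₁))) :=
    adj_lp f (by simp only [sub_zero]; abel)
  have A2 : (incGraph f).Adj (Sum.inl (x₀ + a, f x₀ + (f (x₁ + a) - f x₁)))
      (Sum.inr (a, f (x₁ + a) - f x₁)) :=
    adj_pl f (by simp only [add_sub_cancel_right])
  have A3 : (incGraph f).Adj (Sum.inr (a, f (x₁ + a) - f x₁)) (Sum.inl (x₁ + a, f (x₁ + a))) :=
    adj_lp f (by simp only [add_sub_cancel_right]; abel)
  have A4 : (incGraph f).Adj (Sum.inl (x₁ + a, f (x₁ + a))) (Sum.inr ((0:G), (0:H))) :=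
    adj_pl f (by simp only [sub_zero, add_zero])
  exact A1.reachable.trans (A2.reachable.trans (A3.reachable.trans A4.reachable))

lemma connected_of_all (hall : ∀ b : H, InS1 f ((0:G), b)) : (incGraph f).Connected := by
  have key : ∀ v, (incGraph f).Reachable v (Sum.inr ((0:G), (0:H))) := by
    intro v
    match v with
    | Sum.inl (x, y) =>
        have A : (incGraph f).Adj (Sum.inl (x, y)) (Sum.inr ((0:G), y - f x)) :=
          adj_pl f (by simp only [sub_zero]; abel)
        exact A.reachable.trans (hall (y - f x))
    | Sum.inr (a, b) =>
        have A1 : (incGraph f).Adj (Sum.inr (a, b)) (Sum.inl (a, f 0 + b)) :=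
          adj_lp f (by simp only [sub_self])
        have A2 : (incGraph f).Adj (Sum.inl (a, f 0 + b)) (Sum.inr ((0:G), f 0 + b - f a)) :=
          adj_pl f (by simp only [sub_zero]; abel)
        exact A1.reachable.trans (A2.reachable.trans (hall _))
  rw [SimpleGraph.connected_iff]
  exact ⟨fun v w => (key v).trans (key w).symm, ⟨Sum.inr ((0:G), (0:H))⟩⟩

end Aux2

section Count
variable {G H : Type*} [AddCommGroup G] [AddCommGroup H] [Fintype G] [Fintype H]

lemma image_double [DecidableEq H] (f : G → H) (hf : IsSemiPlanar f) {a : G} (ha : a ≠ 0) :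
    2 * (Finset.image (fun x => f (x + a) - f x) Finset.univ).card = Fintype.card G := by
  classical
  have h1 : (Finset.univ : Finset G).card
      = ∑ y ∈ Finset.image (fun x => f (x + a) - f x) Finset.univ,
        (Finset.univ.filter (fun x => f (x + a) - f x = y)).card :=
    Finset.card_eq_sum_card_image _ _
  have h2 : ∀ y ∈ Finset.image (fun x => f (x + a) - f x) Finset.univ,
      (Finset.univ.filter (fun x => f (x + a) - f x = y)).card = 2 := by
    intro y hy
    have hcard : Nat.card {x : G // f (x + a) - f x = y}
        = (Finset.univ.filter (fun x => f (x + a) - f x = y)).card := by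
      rw [Nat.card_eq_fintype_card, Fintype.card_subtype]
    rcases hf a ha y with h | h
    · exfalso
      obtain ⟨x, _, hx⟩ := Finset.mem_image.mp hy
      have hmem : x ∈ Finset.univ.filter (fun x => f (x + a) - f x = y) := by simp [hx]
      have hpos := Finset.card_pos.mpr ⟨x, hmem⟩
      omega
    · omega
  rw [Finset.card_univ] at h1
  rw [h1, Finset.sum_congr rfl h2, Finset.sum_const, smul_eq_mul, mul_comm]

end Count


/-- If `k > 2` and the incidence graph of `S(G,H;f)` is not connected, then
`P_0^1` is a subgroup of `H` of index 2 and `P_0^2` is its nontrivial coset. -/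
theorem P01_subgroup_index_two {G H : Type*} [AddCommGroup G] [AddCommGroup H]
    [Fintype G] [Fintype H]
    (hcard : Fintype.card G = Fintype.card H) (heven : Even (Fintype.card G))
    (f : G → H) (hf : IsSemiPlanar f)
    (hk : 2 < Fintype.card G) (hnc : ¬ (incGraph f).Connected) :
    ∃ B : AddSubgroup H, B.index = 2 ∧
      (B : Set H) = {b : H | InS1 f ((0 : G), b)} ∧
      ∀ h : H, h ∉ B → {b : H | ¬ InS1 f ((0 : G), b)} = (fun x => h + x) '' (B : Set H) := by
  classical
  set B : AddSubgroup H :=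
    { carrier := {b : H | InS1 f ((0:G), b)}
      zero_mem' := InS1_zero f
      add_mem' := fun hb hb' => InS1_add f hb hb'
      neg_mem' := fun hb => InS1_neg f hb } with hB
  have hmemB : ∀ b : H, b ∈ B ↔ InS1 f ((0:G), b) := fun b => Iff.rfl
  have hBne : B ≠ ⊤ := by
    intro htop
    exact hnc (connected_of_all f (fun b => (hmemB b).mp (htop ▸ AddSubgroup.mem_top b)))
  have hnt : Nontrivial G := Fintype.one_lt_card_iff_nontrivial.mp (by omega)
  obtain ⟨a, ha⟩ := exists_ne (0 : G)
  set Δ : G → H := fun x => f (x + a) - f x with hΔ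
  have hmap : ∀ d ∈ Finset.image Δ Finset.univ, (Δ 0 - d) ∈ B := by
    intro d hd
    obtain ⟨x₀, _, rfl⟩ := Finset.mem_image.mp hd
    exact InS1_diff f a 0 x₀
  have hinj : Function.Injective
      (fun d : (Finset.image Δ Finset.univ : Finset H) => (⟨Δ 0 - d.1, hmap d.1 d.2⟩ : B)) := by
    intro d d' hdd
    have h1 : Δ 0 - (d : H) = Δ 0 - (d' : H) := congrArg (fun z : B => (z : H)) hdd
    exact Subtype.ext (sub_right_injective h1)
  have hle : (Finset.image Δ Finset.univ).card ≤ Fintype.card B := by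
    have := Nat.card_le_card_of_injective _ hinj
    rwa [Nat.card_eq_finsetCard, Nat.card_eq_fintype_card] at this
  have hdouble := image_double f hf ha
  have hmul := B.index_mul_card
  simp only [Nat.card_eq_fintype_card] at hmul
  rw [← hcard] at hmul
  have hcardpos : 0 < Fintype.card B := Fintype.card_pos
  have hne1 : B.index ≠ 1 := fun h1 => hBne (AddSubgroup.index_eq_one.mp h1)
  have hidx : B.index = 2 := by
    have h2le : B.index * Fintype.card B ≤ 2 * Fintype.card B := by
      calc B.index * Fintype.card B = Fintype.card G := hmul
        _ = 2 * (Finset.image Δ Finset.univ).card := hdouble.symm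
        _ ≤ 2 * Fintype.card B := by omega
    have hle2 : B.index ≤ 2 := Nat.le_of_mul_le_mul_right h2le hcardpos
    have hne0 : B.index ≠ 0 := by
      intro h0
      rw [h0, zero_mul] at hmul
      omega
    omega
  have hQcard : Nat.card (H ⧸ B) = 2 := hidx
  have key : ∀ x y : H, x ∉ B → y ∉ B → x - y ∈ B := by
    intro x y hx hy
    obtain ⟨u, v, huv, hset⟩ := Nat.card_eq_two_iff.mp hQcard
    have hmemuv : ∀ z : H ⧸ B, z = u ∨ z = v := by
      intro z
      have : z ∈ ({u, v} : Set (H ⧸ B)) := hset ▸ Set.mem_univ z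
      simpa using this
    have hx0 : ((x : H ⧸ B)) ≠ 0 := by
      simpa [QuotientAddGroup.eq_zero_iff] using hx
    have hy0 : ((y : H ⧸ B)) ≠ 0 := by
      simpa [QuotientAddGroup.eq_zero_iff] using hy
    have hxy : (x : H ⧸ B) = (y : H ⧸ B) := by
      rcases hmemuv 0 with h0 | h0 <;> rcases hmemuv x with h1 | h1 <;>
        rcases hmemuv y with h2 | h2 <;> simp_all
    exact (QuotientAddGroup.eq_iff_sub_mem).mp hxy
  refine ⟨B, hidx, rfl, ?_⟩
  intro h hh
  ext b
  simp only [Set.mem_setOf_eq, Set.mem_image, SetLike.mem_coe]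
  constructor
  · intro hb
    have hbB : b ∉ B := fun hm => hb ((hmemB b).mp hm)
    exact ⟨b - h, key b h hbB hh, by abel⟩
  · rintro ⟨c, hc, rfl⟩ hmem
    have : (h + c) ∈ B := (hmemB _).mpr hmem
    have := B.sub_mem this hc
    rw [add_sub_cancel_right] at this
    exact hh this
end

section
/- Let f : G → H be a semi-planar function between finite abelian groups of the same even order k > 2, and suppose the incidence graph of S(G,H;f) is not connected. Then the set A = {a ∈ G : P_a^1 = P_0^1} is a subgroup of G, and either A = G or A has index 2 in G. -/
section Aux
variable {G H : Type*} [AddCommGroup G] [AddCommGroup H] (f : G → H)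

/-- Translation by `t` is a graph endomorphism of the incidence graph. -/
def transHom (t : G × H) : incGraph f →g incGraph f where
  toFun := Sum.map (fun p => p + t) (fun l => l + t)
  map_rel' := by
    intro x y h
    cases x <;> cases y <;>
      simp only [incGraph, IncAdj, Sum.map_inl, Sum.map_inr] at h ⊢ <;>
      · unfold Incid at h ⊢
        simp only [Prod.fst_add, Prod.snd_add, add_sub_add_right_eq_sub]
        rw [h]; abel

lemma reach_trans (t l l' : G × H)
    (h : (incGraph f).Reachable (Sum.inr l) (Sum.inr l')) :
    (incGraph f).Reachable (Sum.inr (l + t)) (Sum.inr (l' + t)) :=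
  h.map (transHom f t)

/-- The subgroup of `G × H` of lines in the component of `L(0,0)`. -/
def lineComp : AddSubgroup (G × H) where
  carrier := {l | InS1 f l}
  zero_mem' := SimpleGraph.Reachable.refl _
  add_mem' := by
    intro x y hx hy
    have h1 := reach_trans f y _ _ hx
    have e : ((0 : G), (0 : H)) + y = y := by simp
    rw [e] at h1
    exact h1.trans hy
  neg_mem' := by
    intro x hx
    have h1 := reach_trans f (-x) _ _ hx
    have e : ((0 : G), (0 : H)) + -x = -x := by simp
    have e' : x + -x = ((0 : G), (0 : H)) := by simp; rfl
    rw [e, e'] at h1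
    exact h1.symm

lemma mem_lineComp (a x : G) : (a, f x - f (x - a)) ∈ lineComp f := by
  have h1 : (incGraph f).Adj (Sum.inl (x, f x)) (Sum.inr ((0 : G), (0 : H))) := by
    show Incid f (x, f x) ((0 : G), (0 : H))
    simp [Incid]
  have h2 : (incGraph f).Adj (Sum.inr (a, f x - f (x - a))) (Sum.inl (x, f x)) := by
    show Incid f (x, f x) (a, f x - f (x - a))
    unfold Incid
    simp only
    abel
  exact h2.reachable.trans h1.reachable

lemma mem_lineComp' (a x : G) : (a, f (x + a) - f x) ∈ lineComp f := by
  have := mem_lineComp f a (x + a)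
  rwa [add_sub_cancel_right] at this

def Bsub : AddSubgroup H := (lineComp f).comap (AddMonoidHom.inr G H)

lemma diff_mem_Bsub (a x x' : G) :
    (f (x + a) - f x) - (f (x' + a) - f x') ∈ Bsub f := by
  have h1 := mem_lineComp' f a x
  have h2 := mem_lineComp' f a x'
  have h3 := sub_mem h1 h2
  have : (a, f (x + a) - f x) - (a, f (x' + a) - f x')
      = ((0 : G), (f (x + a) - f x) - (f (x' + a) - f x')) := by
    ext <;> simp
  rw [this] at h3
  exact h3

def psiHom : G →+ H ⧸ Bsub f where
  toFun a := QuotientAddGroup.mk (f a - f 0)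
  map_zero' := by simp
  map_add' := by
    intro a a'
    rw [← QuotientAddGroup.mk_add, QuotientAddGroup.eq]
    have h := diff_mem_Bsub f a a' 0
    have heq : -(f (a + a') - f 0) + (f a - f 0 + (f a' - f 0))
        = -((f (a' + a) - f a') - (f (0 + a) - f 0)) := by
      rw [zero_add, add_comm a' a]; abel
    rw [heq]
    exact neg_mem h

end Aux

/-- If `k > 2` and the incidence graph of `S(G,H;f)` is not connected, then
`A = {a : G | P_a^1 = P_0^1}` is a subgroup of `G` which is either all of `G` or
has index 2. -/
theorem A_subgroup {G H : Type*} [AddCommGroup G] [AddCommGroup H]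
    [Fintype G] [Fintype H]
    (hcard : Fintype.card G = Fintype.card H) (heven : Even (Fintype.card G))
    (f : G → H) (hf : IsSemiPlanar f)
    (hk : 2 < Fintype.card G) (hnc : ¬ (incGraph f).Connected) :
    ∃ A : AddSubgroup G,
      (A : Set G) = {a : G | {b : H | InS1 f (a, b)} = {b : H | InS1 f ((0 : G), b)}} ∧
      (A = ⊤ ∨ A.index = 2) := by
  classical
  set K := lineComp f with hK
  set B := Bsub f with hB
  -- membership facts
  have hmemK : ∀ l : G × H, l ∈ K ↔ InS1 f l := fun l => Iff.rfl
  have hmemB : ∀ b : H, b ∈ B ↔ ((0 : G), b) ∈ K := fun b => Iff.rfl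
  have hslice : ∀ a : G, (a, f a - f 0) ∈ K := by
    intro a
    have := mem_lineComp f a a
    rwa [sub_self] at this
  -- the subgroup A
  refine ⟨K.comap (AddMonoidHom.inl G H), ?_, ?_⟩
  · ext a
    simp only [AddSubgroup.coe_comap, Set.mem_preimage, SetLike.mem_coe, Set.mem_setOf_eq,
      AddMonoidHom.inl_apply]
    constructor
    · intro h
      ext b
      simp only [Set.mem_setOf_eq, ← hmemK]
      constructor
      · intro hb
        have : (a, b) - (a, (0 : H)) = ((0 : G), b) := by ext <;> simp
        rw [← this]; exact sub_mem hb h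
      · intro hb
        have : (a, (0 : H)) + ((0 : G), b) = (a, b) := by ext <;> simp
        rw [← this]; exact add_mem h hb
    · intro h
      have h1 : (a, f a - f 0) ∈ K := hslice a
      have h2 : f a - f 0 ∈ {b : H | InS1 f (a, b)} := h1
      rw [h] at h2
      have h3 : ((0 : G), f a - f 0) ∈ K := h2
      have : (a, f a - f 0) - ((0 : G), f a - f 0) = (a, (0 : H)) := by ext <;> simp
      rw [← this]; exact sub_mem h1 h3
  · -- index part
    -- pick a nonzero element
    obtain ⟨a0, ha0⟩ := Fintype.exists_ne_of_one_lt_card (by omega) (0 : G)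
    -- the difference map lands in B
    set g : G → H := fun x => f (x + a0) - f x - (f a0 - f 0) with hg
    have hgB : ∀ x, g x ∈ B := by
      intro x
      have := diff_mem_Bsub f a0 x 0
      rwa [zero_add] at this
    -- fibers of g have size ≤ 2
    have hfib : ∀ c : H, (Finset.univ.filter fun x => g x = c).card ≤ 2 := by
      intro c
      have hcongr : (Finset.univ.filter fun x => g x = c).card
          = Nat.card {x : G // f (x + a0) - f x = c + (f a0 - f 0)} := by
        rw [Nat.card_eq_fintype_card, Fintype.card_subtype]
        congr 1
        apply Finset.filter_congr
        intro x _
        simp only [hg, sub_eq_iff_eq_add]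
      rw [hcongr]
      rcases hf a0 ha0 (c + (f a0 - f 0)) with h | h <;> omega
    -- counting: card G ≤ 2 * card B
    have hcount : Fintype.card G ≤ 2 * Nat.card B := by
      have hmaps : ∀ x ∈ Finset.univ, g x ∈ Finset.univ.filter (· ∈ B) := by
        intro x _; simp [hgB x]
      have := Finset.card_le_mul_card_image_of_maps_to hmaps 2
        (fun b _ => hfib b)
      have hBcard : (Finset.univ.filter (· ∈ B)).card = Nat.card B := by
        rw [Nat.card_eq_fintype_card, Fintype.card_subtype]
      rw [hBcard] at this
      simpa using this
    -- B has index ≤ 2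
    have hBindex : B.index ≤ 2 := by
      have hmul : B.index * Nat.card B = Nat.card H := AddSubgroup.index_mul_card B
      have hpos : 0 < Nat.card B := Nat.card_pos
      have hHG : Nat.card H = Fintype.card G := by
        rw [Nat.card_eq_fintype_card, hcard]
      nlinarith [hcount, hmul, hpos]
    -- A is the kernel of psiHom
    have hker : K.comap (AddMonoidHom.inl G H) = (psiHom f).ker := by
      ext a
      simp only [AddSubgroup.mem_comap, AddMonoidHom.inl_apply, AddMonoidHom.mem_ker]
      show (a, (0:H)) ∈ K ↔ QuotientAddGroup.mk (f a - f 0) = 0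
      rw [QuotientAddGroup.eq_zero_iff]
      rw [show Bsub f = B from rfl, hmemB]
      constructor
      · intro h
        have : (a, f a - f 0) - (a, (0 : H)) = ((0 : G), f a - f 0) := by ext <;> simp
        rw [← this]; exact sub_mem (hslice a) h
      · intro h
        have : (a, f a - f 0) - ((0 : G), f a - f 0) = (a, (0 : H)) := by ext <;> simp
        rw [← this]; exact sub_mem (hslice a) h
    -- index of A ≤ 2
    have hAindex : (K.comap (AddMonoidHom.inl G H)).index ≤ 2 := by
      rw [hker]
      have h1 : (psiHom f).ker.index = Nat.card (G ⧸ (psiHom f).ker) := rfl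
      have h2 : Nat.card (G ⧸ (psiHom f).ker) = Nat.card (psiHom f).range :=
        Nat.card_congr (QuotientAddGroup.quotientKerEquivRange (psiHom f)).toEquiv
      have h3 : Nat.card (psiHom f).range ≤ Nat.card (H ⧸ B) :=
        Nat.card_le_card_of_injective _ Subtype.val_injective
      have h4 : Nat.card (H ⧸ B) = B.index := rfl
      omega
    have hApos : (K.comap (AddMonoidHom.inl G H)).index ≠ 0 :=
      AddSubgroup.index_ne_zero_of_finite
    interval_cases h : (K.comap (AddMonoidHom.inl G H)).index
    · omega
    · left; exact AddSubgroup.index_eq_one.mp h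
    · right; rfl
end

section
/- Let k be an even integer with k > 4 and let f : ℤ/kℤ → ℤ/kℤ. If there exists y ∈ ℤ/kℤ such that the equation f(x) = y has more than k/2 solutions x ∈ ℤ/kℤ, then f is not semi-planar. -/
/-- If `k > 4` is even and some value `y` is taken by `f : ℤ/kℤ → ℤ/kℤ` more than
`k/2` times, then `f` is not semi-planar. -/
theorem not_semiPlanar_of_many_solutions (k : ℕ) (hk : 4 < k) (hke : Even k)
    (f : ZMod k → ZMod k) (y : ZMod k)
    (hy : k / 2 < Nat.card {x : ZMod k // f x = y}) :
    ¬ IsSemiPlanar f := by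
  intro hsp
  haveI : NeZero k := ⟨by omega⟩
  classical
  set S : Finset (ZMod k) := Finset.univ.filter (fun x => f x = y) with hS
  have hScard : Nat.card {x : ZMod k // f x = y} = S.card := by
    rw [Nat.card_eq_fintype_card, Fintype.card_subtype]
  rw [hScard] at hy
  set Q : Finset (ZMod k) := Finset.univ.filter (fun a => a ≠ 0) with hQ
  set Sol : ZMod k → Finset (ZMod k) :=
    fun a => Finset.univ.filter (fun x => f (x + a) - f x = 0) with hSolDef
  have hSol : ∀ a ∈ Q, (Sol a).card ≤ 2 := by
    intro a ha
    have ha0 : a ≠ 0 := (Finset.mem_filter.mp ha).2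
    have h := hsp a ha0 0
    have hcard : Nat.card {x : ZMod k // f (x + a) - f x = 0} = (Sol a).card := by
      rw [Nat.card_eq_fintype_card, Fintype.card_subtype]
    rw [hcard] at h
    omega
  -- injection from offDiag pairs of S into solutions
  have hmap : S.offDiag.card ≤ (Q.sigma Sol).card := by
    apply Finset.card_le_card_of_injOn (fun p => (⟨p.2 - p.1, p.1⟩ : Σ _ : ZMod k, ZMod k))
    · intro p hp
      obtain ⟨hp1, hp2, hpne⟩ := Finset.mem_offDiag.mp hp
      have hf1 : f p.1 = y := (Finset.mem_filter.mp hp1).2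
      have hf2 : f p.2 = y := (Finset.mem_filter.mp hp2).2
      rw [Finset.mem_coe, Finset.mem_sigma]
      constructor
      · simp [hQ, sub_ne_zero.mpr (Ne.symm hpne)]
      · simp only [hSolDef, Finset.mem_filter, Finset.mem_univ, true_and]
        rw [add_sub_cancel, hf1, hf2, sub_self]
    · intro p hp q hq hpq
      simp only [Sigma.mk.inj_iff, heq_eq_eq] at hpq
      obtain ⟨h1, h2⟩ := hpq
      have : p.2 = q.2 := by
        rw [h2] at h1
        exact sub_left_injective h1
      exact Prod.ext h2 this
  have hsum : (Q.sigma Sol).card ≤ 2 * (k - 1) := by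
    rw [Finset.card_sigma]
    have hQcard : Q.card = k - 1 := by
      have : Q = Finset.univ \ {0} := by
        ext a; simp [hQ]
      rw [this, Finset.card_sdiff_of_subset (by simp), Finset.card_univ, ZMod.card,
        Finset.card_singleton]
    calc ∑ a ∈ Q, (Sol a).card ≤ ∑ _a ∈ Q, 2 := Finset.sum_le_sum hSol
      _ = 2 * (k - 1) := by rw [Finset.sum_const, hQcard]; ring
  rw [Finset.offDiag_card] at hmap
  -- arithmetic contradiction
  obtain ⟨m, hm⟩ := hke
  have hm3 : 3 ≤ m := by omega
  have hs : m + 1 ≤ S.card := by omega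
  have hss : S.card * S.card ≤ 2 * (k - 1) + S.card :=
    tsub_le_iff_right.mp (le_trans hmap hsum)
  have h2 : 2 * (k - 1) + 2 = 4 * m := by omega
  have h3 : (m + 1) * S.card ≤ S.card * S.card := Nat.mul_le_mul_right _ hs
  have h4 : m * (m + 1) ≤ m * S.card := Nat.mul_le_mul_left m hs
  nlinarith [hss, h2, h3, h4, hm3]
end

section
/- There is no semi-planar function f : ℤ/6ℤ → ℤ/6ℤ; that is, there is no function f : ℤ/6ℤ → ℤ/6ℤ such that for every nonzero a ∈ ℤ/6ℤ and every y ∈ ℤ/6ℤ the equation f(x + a) − f(x) = y has either 0 or exactly 2 solutions x ∈ ℤ/6ℤ. -/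
/-- A `Finset`-based version of the semi-planarity check. -/
abbrev checkF (g : ZMod 6 → ZMod 6) : Prop :=
  ∀ a : ZMod 6, a ≠ 0 → ∀ y : ZMod 6,
    (Finset.univ.filter (fun x => g (x + a) - g x = y)).card = 0 ∨
    (Finset.univ.filter (fun x => g (x + a) - g x = y)).card = 2

/-- Brute-force check: no function vanishing at `0` and `1` passes the check. -/
lemma key : ∀ v2 v3 v4 v5 : ZMod 6,
    ¬ checkF (fun x => if x = 2 then v2 else if x = 3 then v3 else
      if x = 4 then v4 else if x = 5 then v5 else 0) := by decide

lemma card_eq (p : ZMod 6 → Prop) [DecidablePred p] :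
    Nat.card {x // p x} = (Finset.univ.filter p).card := by
  rw [Nat.card_eq_fintype_card, Fintype.card_subtype]

/-- There is no semi-planar function on `ℤ/6ℤ`. -/
theorem no_semiPlanar_ZMod6 : ∀ f : ZMod 6 → ZMod 6, ¬ IsSemiPlanar f := by
  intro f hf
  set c : ZMod 6 := f 0 - f 1 with hc
  set g : ZMod 6 → ZMod 6 := fun x => f x + c * x - f 0 with hg
  have hcheck : checkF g := by
    intro a ha y
    have key2 : ∀ x : ZMod 6, (g (x + a) - g x = y) ↔ (f (x + a) - f x = y - c * a) := by
      intro x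
      constructor <;> intro h <;>
        · simp only [hg] at *
          linear_combination h
    have hfilt : (Finset.univ.filter (fun x => g (x + a) - g x = y)) =
        (Finset.univ.filter (fun x => f (x + a) - f x = y - c * a)) := by
      apply Finset.filter_congr
      intro x _
      simp [key2 x]
    rw [hfilt]
    have := hf a ha (y - c * a)
    rwa [card_eq] at this
  have hform : g = (fun x => if x = 2 then g 2 else if x = 3 then g 3 else
      if x = 4 then g 4 else if x = 5 then g 5 else 0) := by
    funext x
    have h0 : g 0 = 0 := by simp [hg]
    have h1 : g 1 = 0 := by simp [hg, hc]
    rcases (by decide : ∀ x : ZMod 6, x = 0 ∨ x = 1 ∨ x = 2 ∨ x = 3 ∨ x = 4 ∨ x = 5) x with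
      rfl | rfl | rfl | rfl | rfl | rfl <;>
      simp_all [show ((0:ZMod 6)) ≠ 2 from by decide, show ((0:ZMod 6)) ≠ 3 from by decide,
        show ((0:ZMod 6)) ≠ 4 from by decide, show ((0:ZMod 6)) ≠ 5 from by decide,
        show ((1:ZMod 6)) ≠ 2 from by decide, show ((1:ZMod 6)) ≠ 3 from by decide,
        show ((1:ZMod 6)) ≠ 4 from by decide, show ((1:ZMod 6)) ≠ 5 from by decide,
        show ((3:ZMod 6)) ≠ 2 from by decide, show ((4:ZMod 6)) ≠ 2 from by decide,
        show ((4:ZMod 6)) ≠ 3 from by decide, show ((5:ZMod 6)) ≠ 2 from by decide,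
        show ((5:ZMod 6)) ≠ 3 from by decide, show ((5:ZMod 6)) ≠ 4 from by decide]
  exact key (g 2) (g 3) (g 4) (g 5) (hform ▸ hcheck)
end
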